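/- Let a ≥ 3 be a real number and let P ∈ E_a(ℝ) be a point of infinite order. Then −(1/4)·log a − 0.16 < ( (1/2)·log max{1, |x(P)|} − (1/12)·log|Δ(E_a)| ) − λ_∞(P). -/

import Mathlib

open Filter Real

/-- The translated elliptic curve `E'_a : y² = x³ − 3√a·x² + 4a·x − 2a^{3/2}` over `ℝ`,
obtained from `E_a : y² = x³ + a·x` via `x ↦ x + √a`. -/
noncomputable def E'curve (a : ℝ) : WeierstrassCurve.Affine ℝ :=
  { a₁ := 0, a₂ := -3 * Real.sqrt a, a₃ := 0, a₄ := 4 * a, a₆ := -2 * a ^ ((3 : ℝ) / 2) }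

/-- The x-coordinate of a point (with junk value `0` at the identity `O`). -/
def xc {F : Type*} [Field F] {W : WeierstrassCurve.Affine F} : W.Point → F
  | .zero => 0
  | @WeierstrassCurve.Affine.Point.some _ _ _ x _ _ => x

/-- For a finite point `Q` of `E'_a` with `x(Q) = x`, the quantity
`z(Q) = 1 − 8a·x⁻² + 16·a^{3/2}·x⁻³ − 8a²·x⁻⁴` from Tate's series. -/
noncomputable def zE' (a x : ℝ) : ℝ :=
  1 - 8 * a / x ^ 2 + 16 * a ^ ((3 : ℝ) / 2) / x ^ 3 - 8 * a ^ 2 / x ^ 4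

/-- The archimedean local height of a point `P ∈ E_a(ℝ)` of infinite order (`a > 0`),
computed on the translated curve `E'_a` at the corresponding point `P'`:
`λ_∞(P) = (1/8)·log(x(P')⁴·z(P')) + (1/8)·S − (1/12)·log|Δ(E_a)|`, where `S` is the
(hypothesized) value of the series `∑_{k≥1} 4^{−k}·log z(2^kP')` and `Δ(E_a) = −64a³`. -/
noncomputable def lamInf' (a : ℝ) {W : WeierstrassCurve.Affine ℝ} (P' : W.Point) (S : ℝ) : ℝ :=
  (1 / 8) * Real.log ((xc P') ^ 4 * zE' a (xc P')) + (1 / 8) * S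
    - (1 / 12) * Real.log |(-64) * a ^ 3|

lemma rpow32 (a : ℝ) (ha : 0 ≤ a) : a ^ ((3:ℝ)/2) = Real.sqrt a ^ 3 := by
  rw [show ((3:ℝ)/2) = (1/2:ℝ) * ((3:ℕ):ℝ) by norm_num, Real.rpow_mul ha,
    ← Real.sqrt_eq_rpow, Real.rpow_natCast]

lemma lemA (b : ℝ) (hb2 : 3 ≤ b^2) (hb1 : 1 ≤ b) :
    0 ≤ 2.53*b^4 - 4*b^3 + 2*b^2 - 4*b - 1 := by
  have hb : (1.732:ℝ) ≤ b := by nlinarith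
  nlinarith [sq_nonneg (b - 1.732),
    mul_nonneg (mul_nonneg (sub_nonneg.2 hb) (sub_nonneg.2 hb)) (sub_nonneg.2 hb),
    sq_nonneg ((b-1.732)^2)]

lemma caseA (b u : ℝ) (hb2 : 3 ≤ b^2) (hb1 : 1 ≤ b) (hu : 0 ≤ u) (hu1 : u ≤ 1) :
    b^4 + 4*b^3*u - 2*b^2*u^2 + 4*b*u^3 + u^4 ≤ 3.53 * b^4 := by
  have h1 : 0 ≤ (1-u) * (4*b^3 - 2*b^2*(1+u) + 4*b*(1+u+u^2) + (1+u)*(1+u^2)) := by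
    have : 0 ≤ 4*b^3 - 2*b^2*(1+u) + 4*b*(1+u+u^2) + (1+u)*(1+u^2) := by nlinarith
    exact mul_nonneg (by linarith) this
  nlinarith [lemA b hb2 hb1, h1]

lemma caseB (b u : ℝ) (hb2 : 3 ≤ b^2) (hb1 : 1 ≤ b) (hu : 1 ≤ u) :
    b^4 + 4*b^3*u - 2*b^2*u^2 + 4*b*u^3 + u^4 ≤ 3.53 * b^4 * u^4 := by
  have hu2 : 1 ≤ u^2 := by nlinarith
  have hu4 : 1 ≤ u^4 := by nlinarith
  have hu3 : u^3 ≤ u^4 := by nlinarith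
  have huu : u ≤ u^4 := by nlinarith
  have h1 : 0 ≤ (b^2 - 3) * (u^4 - 1) := mul_nonneg (by linarith) (by linarith)
  have h2 : 0 ≤ b^2 * (u^4 + 2*u^2 - 3) := mul_nonneg (sq_nonneg b) (by linarith)
  have h3 : 0 ≤ 4*b^3*(u^4 - u) := mul_nonneg (by positivity) (by linarith)
  have h4 : 0 ≤ 4*b*(u^4 - u^3) := mul_nonneg (by positivity) (by linarith)
  have h5 : 0 ≤ (2.53*b^4 - 4*b^3 + 2*b^2 - 4*b - 1) * u^4 :=
    mul_nonneg (lemA b hb2 hb1) (by positivity)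
  nlinarith [h1, h2, h3, h4, h5]

lemma numPos (b u : ℝ) (hb1 : 1 ≤ b) (hu : 0 ≤ u) :
    0 < b^4 + 4*b^3*u - 2*b^2*u^2 + 4*b*u^3 + u^4 := by
  nlinarith [mul_nonneg (mul_nonneg (by linarith : (0:ℝ) ≤ 4*b) hu) (sq_nonneg (b-u)),
    pow_pos (by linarith : (0:ℝ) < b) 4,
    mul_nonneg (mul_nonneg hu hu) (mul_nonneg hu hu)]

lemma xge (a : ℝ) (ha : 3 ≤ a) (x y : ℝ) (h : (E'curve a).Equation x y) :
    Real.sqrt a ≤ x := by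
  have ha0 : (0:ℝ) ≤ a := by linarith
  set b := Real.sqrt a with hb
  have hb2 : b ^ 2 = a := Real.sq_sqrt ha0
  rw [WeierstrassCurve.Affine.equation_iff] at h
  simp only [E'curve, rpow32 a ha0, ← hb] at h
  by_contra hc
  push_neg at hc
  nlinarith [sq_nonneg y, sq_nonneg (x - b)]

lemma sqrt_ge_one (a : ℝ) (ha : 3 ≤ a) : (1:ℝ) ≤ Real.sqrt a := by
  rw [show (1:ℝ) = Real.sqrt 1 by simp]; exact Real.sqrt_le_sqrt (by linarith)

lemma zE'_eq (a x b : ℝ) (ha : 0 ≤ a) (hb : b = Real.sqrt a) (hx : x ≠ 0) :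
    zE' a x = (x^4 - 8*b^2*x^2 + 16*b^3*x - 8*b^4) / x^4 := by
  have hb2 : b ^ 2 = a := hb ▸ Real.sq_sqrt ha
  rw [zE', rpow32 a ha, ← hb, ← hb2]
  field_simp

lemma log_z_nonpos (a : ℝ) (ha : 3 ≤ a) (Q : (E'curve a).Point) :
    Real.log (zE' a (xc Q)) ≤ 0 := by
  have ha0 : (0:ℝ) ≤ a := by linarith
  cases Q with
  | zero => norm_num [zE', xc]
  | some x y h =>
    have hx : Real.sqrt a ≤ x := xge a ha x y h.1
    set b := Real.sqrt a with hb
    have hb2 : b ^ 2 = a := Real.sq_sqrt ha0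
    have hb1 : (1:ℝ) ≤ b := sqrt_ge_one a ha
    have hx0 : (0:ℝ) < x := by linarith
    have hzeq : zE' a x = (x^4 - 8*b^2*x^2 + 16*b^3*x - 8*b^4) / x^4 :=
      zE'_eq a x b ha0 hb hx0.ne'
    have hxcq : xc (WeierstrassCurve.Affine.Point.some x y h) = x := rfl
    rw [hxcq, hzeq]
    apply Real.log_nonpos
    · apply div_nonneg _ (by positivity)
      nlinarith [numPos b (x - b) hb1 (by linarith)]
    · rw [div_le_one (by positivity)]
      nlinarith [sq_nonneg (x - b)]

lemma log353 : Real.log 3.53 < 1.28 := by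
  have h1 : (3.53:ℝ) = 4 * 0.8825 := by norm_num
  have h2 : Real.log (4 * 0.8825 : ℝ) = Real.log 4 + Real.log 0.8825 :=
    Real.log_mul (by norm_num) (by norm_num)
  have h3 : Real.log (4:ℝ) = 2 * Real.log 2 := by
    rw [show (4:ℝ) = 2^(2:ℕ) by norm_num, Real.log_pow]; norm_num
  have h4 : Real.log (0.8825:ℝ) ≤ 0.8825 - 1 := Real.log_le_sub_one_of_pos (by norm_num)
  have h5 : Real.log 2 < 0.6931471808 := Real.log_two_lt_d9
  rw [h1, h2, h3]
  linarith

/-- Lemma 3.4(c): for `a ≥ 3` and a point `P ∈ E_a(ℝ)` of infinite order (given by the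
corresponding point `P'` on the translated curve `E'_a`, so `x(P) = x(P') − √a`),
`−(1/4)·log a − 0.16 < ((1/2)·log max{1,|x(P)|} − (1/12)·log|Δ(E_a)|) − λ_∞(P)`. -/
theorem arch_a_pos_part_c (a : ℝ) (ha : 3 ≤ a)
    (P' : (E'curve a).Point)
    (hP : ∀ n : ℕ, 0 < n → n • P' ≠ 0)
    (S : ℝ)
    (hS : HasSum
      (fun k : ℕ => (1 / 4 : ℝ) ^ (k + 1) * Real.log (zE' a (xc ((2 ^ (k + 1)) • P')))) S) :
    -(1 / 4) * Real.log a - 0.16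
        < ((1 / 2) * Real.log (max 1 |xc P' - Real.sqrt a|)
              - (1 / 12) * Real.log |(-64) * a ^ 3|)
            - lamInf' a P' S := by
  have ha0 : (0:ℝ) ≤ a := by linarith
  have hS0 : S ≤ 0 := by
    refine hasSum_le (fun k => ?_) hS hasSum_zero
    exact mul_nonpos_of_nonneg_of_nonpos (by positivity) (log_z_nonpos a ha _)
  cases P' with
  | zero =>
    exfalso
    have h1 := hP 1 one_pos
    rw [one_smul] at h1
    exact h1 rfl
  | some x y h =>
    have hx : Real.sqrt a ≤ x := xge a ha x y h.1
    set b := Real.sqrt a with hb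
    have hb2 : b ^ 2 = a := Real.sq_sqrt ha0
    have hb23 : 3 ≤ b ^ 2 := by linarith
    have hb1 : (1:ℝ) ≤ b := sqrt_ge_one a ha
    have hx0 : (0:ℝ) < x := by linarith
    have hxcq : xc (WeierstrassCurve.Affine.Point.some x y h) = x := rfl
    have hzeq : zE' a x = (x^4 - 8*b^2*x^2 + 16*b^3*x - 8*b^4) / x^4 :=
      zE'_eq a x b ha0 hb hx0.ne'
    have hxz : x ^ 4 * zE' a x = x^4 - 8*b^2*x^2 + 16*b^3*x - 8*b^4 := by
      rw [hzeq]; field_simp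
    have habs : |x - b| = x - b := abs_of_nonneg (by linarith)
    set M : ℝ := max 1 (x - b) with hM
    have hM1 : (1:ℝ) ≤ M := le_max_left _ _
    have hM0 : (0:ℝ) < M := by linarith
    have hnum : x^4 - 8*b^2*x^2 + 16*b^3*x - 8*b^4
        = b^4 + 4*b^3*(x-b) - 2*b^2*(x-b)^2 + 4*b*(x-b)^3 + (x-b)^4 := by ring
    have hpos : 0 < x ^ 4 * zE' a x := by
      rw [hxz, hnum]; exact numPos b (x-b) hb1 (by linarith)
    have hmain : x ^ 4 * zE' a x ≤ 3.53 * M^4 * b^4 := by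
      rw [hxz, hnum]
      rcases le_total (x - b) 1 with hc | hc
      · rw [hM, max_eq_left hc]
        have := caseA b (x-b) hb23 hb1 (by linarith) hc
        nlinarith [this]
      · rw [hM, max_eq_right hc]
        have := caseB b (x-b) hb23 hb1 hc
        nlinarith [this]
    have hlogb : Real.log b = Real.log a / 2 := Real.log_sqrt ha0
    have hlog : Real.log (x ^ 4 * zE' a x)
        ≤ Real.log 3.53 + 4 * Real.log M + 2 * Real.log a := by
      have h1 : Real.log (x ^ 4 * zE' a x) ≤ Real.log (3.53 * M^4 * b^4) :=
        Real.log_le_log hpos hmain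
      have h2 : Real.log (3.53 * M^4 * b^4)
          = Real.log 3.53 + Real.log (M^4) + Real.log (b^4) := by
        rw [Real.log_mul (by positivity) (by positivity),
          Real.log_mul (by norm_num) (by positivity)]
      have h3 : Real.log (M^4) = 4 * Real.log M := by
        rw [Real.log_pow]; norm_num
      have h4 : Real.log (b^4) = 2 * Real.log a := by
        rw [Real.log_pow, hlogb]; push_cast; ring
      rw [h2, h3, h4] at h1
      exact h1
    rw [lamInf', hxcq, habs, ← hM]
    have h353 := log353
    linarith
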